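/- arXiv:1508.03701 — 4 statements merged into one kernel-verified Lean document; each statement's English description precedes it below -/
import Mathlib

section
/- Let k ≥ 3 be a natural number and let y, y' ∈ ℝ^k satisfy ∑_{i=1}^k y_i^2 = 1 and ∑_{i=1}^k y'_i{}^2 = 1. Set x_i = y_i^2 and x'_i = y'_i{}^2. Then 2^{−k} · ∑_{σ ∈ {−1,+1}^k} ((2·2 + k − 2)/(k − 2)) · C_2^{k/2−1}(∑_{i=1}^k σ_i y_i y'_i) = (k/2 + 1) · (k · ∑_{j=1}^k x_j x'_j − 1), i.e., the sign-averaged degree-2 Gegenbauer term equals the Griffiths eigenfunction Q_1(x, x') = (μ+1)(ξ_1 − 1) with μ = k/2, ε = 1/2, ξ_1 = μ ∑_j x_j x'_j / ε. -/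
/-- The Gegenbauer polynomial C_L^p(z). -/
noncomputable def gegenbauer (p : ℝ) (L : ℕ) (z : ℝ) : ℝ :=
  ∑ j ∈ Finset.range (L / 2 + 1),
    (-1) ^ j * Real.Gamma ((L : ℝ) - j + p) /
      (Real.Gamma p * (Nat.factorial j) * (Nat.factorial (L - 2 * j))) * (2 * z) ^ (L - 2 * j)

/-- The sign ±1 attached to a boolean. -/
def sgn (b : Bool) : ℝ := if b then 1 else -1

lemma sgn_sq (b : Bool) : sgn b * sgn b = 1 := by cases b <;> simp [sgn]

lemma sgn_not (b : Bool) : sgn (!b) = - sgn b := by cases b <;> simp [sgn]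

lemma geg_two (p : ℝ) (hp : 0 < p) (z : ℝ) :
    gegenbauer p 2 z = 2 * p * (p + 1) * z ^ 2 - p := by
  have hΓ : Real.Gamma p ≠ 0 := (Real.Gamma_pos_of_pos hp).ne'
  have h1 : Real.Gamma (1 + p) = p * Real.Gamma p := by
    rw [add_comm]; exact Real.Gamma_add_one hp.ne'
  have h2 : Real.Gamma (2 + p) = (p + 1) * (p * Real.Gamma p) := by
    rw [show (2 : ℝ) + p = (p + 1) + 1 by ring, Real.Gamma_add_one (by positivity)]
    rw [Real.Gamma_add_one hp.ne']
  unfold gegenbauer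
  rw [show (2 / 2 + 1) = 2 from rfl, Finset.sum_range_succ, Finset.sum_range_succ,
    Finset.sum_range_zero]
  norm_num [Nat.factorial]
  rw [h2, h1]
  field_simp
  ring

lemma sum_sgn_pair {k : ℕ} (i j : Fin k) (hij : i ≠ j) :
    ∑ σ : Fin k → Bool, sgn (σ i) * sgn (σ j) = 0 := by
  apply Finset.sum_involution (fun σ _ => Function.update σ i (!σ i))
  · intro σ _
    simp [Function.update_apply, hij.symm, sgn_not]
  · intro σ _ h heq
    have : Function.update σ i (!σ i) i = σ i := by rw [heq]
    simp at this
  · intro σ _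
    funext t
    by_cases ht : t = i
    · subst ht; simp
    · simp [Function.update_apply, ht]
  · intro σ _
    exact Finset.mem_univ _

lemma sum_sgn_sq {k : ℕ} (a : Fin k → ℝ) :
    ∑ σ : Fin k → Bool, (∑ i : Fin k, sgn (σ i) * a i) ^ 2
      = 2 ^ k * ∑ i : Fin k, (a i) ^ 2 := by
  have step : ∀ σ : Fin k → Bool, (∑ i : Fin k, sgn (σ i) * a i) ^ 2
      = ∑ i : Fin k, ∑ j : Fin k, (sgn (σ i) * sgn (σ j)) * (a i * a j) := by
    intro σ
    rw [sq, Finset.sum_mul_sum]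
    apply Finset.sum_congr rfl; intro i _
    apply Finset.sum_congr rfl; intro j _
    ring
  calc ∑ σ : Fin k → Bool, (∑ i : Fin k, sgn (σ i) * a i) ^ 2
      = ∑ i : Fin k, ∑ j : Fin k, (∑ σ : Fin k → Bool, sgn (σ i) * sgn (σ j)) * (a i * a j) := by
        simp_rw [step]
        rw [Finset.sum_comm]
        apply Finset.sum_congr rfl; intro i _
        rw [Finset.sum_comm]
        apply Finset.sum_congr rfl; intro j _
        rw [Finset.sum_mul]
    _ = ∑ i : Fin k, (2 : ℝ) ^ k * (a i * a i) := by
        apply Finset.sum_congr rfl; intro i _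
        rw [Finset.sum_eq_single i]
        · congr 1
          simp_rw [sgn_sq]
          simp [Finset.card_univ, Fintype.card_fun]
        · intro j _ hj
          rw [sum_sgn_pair i j (Ne.symm hj), zero_mul]
        · intro h; exact absurd (Finset.mem_univ i) h
    _ = 2 ^ k * ∑ i : Fin k, (a i) ^ 2 := by
        rw [Finset.mul_sum]; apply Finset.sum_congr rfl; intro i _; ring

/-- The sign-averaged degree-2 Gegenbauer term equals the Griffiths eigenfunction
Q_1(x,x') = (μ+1)(ξ_1 − 1) with μ = k/2, ε = 1/2, x_i = y_i², x'_i = y'_i². -/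
theorem degree_two_gegenbauer_eq_Q1 (k : ℕ) (hk : 3 ≤ k) (y y' : Fin k → ℝ)
    (hy : ∑ i : Fin k, (y i) ^ 2 = 1) (hy' : ∑ i : Fin k, (y' i) ^ 2 = 1)
    (x x' : Fin k → ℝ) (hx : ∀ i, x i = (y i) ^ 2) (hx' : ∀ i, x' i = (y' i) ^ 2) :
    ((2 : ℝ) ^ k)⁻¹ * ∑ σ : Fin k → Bool,
        ((2 * 2 + (k : ℝ) - 2) / ((k : ℝ) - 2)) *
          gegenbauer ((k : ℝ) / 2 - 1) 2 (∑ i : Fin k, sgn (σ i) * y i * y' i) =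
      ((k : ℝ) / 2 + 1) * ((k : ℝ) * (∑ j : Fin k, x j * x' j) - 1) := by
  have hk3 : (3 : ℝ) ≤ (k : ℝ) := by exact_mod_cast hk
  set p : ℝ := (k : ℝ) / 2 - 1 with hp
  have hp0 : 0 < p := by rw [hp]; linarith
  have hgeg : ∀ σ : Fin k → Bool,
      gegenbauer p 2 (∑ i : Fin k, sgn (σ i) * y i * y' i)
        = 2 * p * (p + 1) * (∑ i : Fin k, sgn (σ i) * (y i * y' i)) ^ 2 - p := by
    intro σ
    rw [geg_two p hp0,
      show (∑ i : Fin k, sgn (σ i) * y i * y' i) = ∑ i : Fin k, sgn (σ i) * (y i * y' i)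
        from Finset.sum_congr rfl (fun i _ => by ring)]
  simp_rw [hgeg]
  rw [← Finset.mul_sum, Finset.sum_sub_distrib, ← Finset.mul_sum, sum_sgn_sq (fun i => y i * y' i),
    Finset.sum_const, Finset.card_univ, nsmul_eq_mul]
  have hS : ∑ i : Fin k, (y i * y' i) ^ 2 = ∑ j : Fin k, x j * x' j := by
    apply Finset.sum_congr rfl; intro i _
    rw [hx, hx']; ring
  rw [hS]
  have hcard : ((Fintype.card (Fin k → Bool) : ℕ) : ℝ) = 2 ^ k := by
    simp [Fintype.card_fun]
  rw [hcard, hp]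
  have h2 : ((2 : ℝ) ^ k) ≠ 0 := by positivity
  have hkm2 : (k : ℝ) - 2 ≠ 0 := by linarith
  field_simp
  ring
end

section
/- Let k ≥ 3 be a natural number and let y, y' ∈ ℝ^k satisfy ∑_{i=1}^k y_i^2 = 1 and ∑_{i=1}^k y'_i{}^2 = 1. Set x_i = y_i^2, x'_i = y'_i{}^2, μ = k/2, s_2 = ∑_{j=1}^k x_j x'_j and s_4 = ∑_{j=1}^k (x_j x'_j)^2. Then 2^{−k} · ∑_{σ ∈ {−1,+1}^k} ((2·4 + k − 2)/(k − 2)) · C_4^{k/2−1}(∑_{i=1}^k σ_i y_i y'_i) = (1/2)(μ+3)[(μ+2)·ξ_2 − 2(μ+1)·ξ_1 + μ], where ξ_1 = 2μ·s_2 and ξ_2 = μ(μ+1)·((4/3)·s_4 + 4·(s_2^2 − s_4)), i.e., the sign-averaged degree-4 Gegenbauer term equals the Griffiths eigenfunction Q_2(x, x') for mutation rate ε = 1/2. -/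
lemma gegenbauer_four (p : ℝ) (hp : 0 < p) (z : ℝ) :
    gegenbauer p 4 z
      = (2 / 3) * (p * (p + 1) * (p + 2) * (p + 3)) * z ^ 4
        - 2 * (p * (p + 1) * (p + 2)) * z ^ 2 + p * (p + 1) / 2 := by
  have hΓ : Real.Gamma p ≠ 0 := (Real.Gamma_pos_of_pos hp).ne'
  have h1 : Real.Gamma (p + 1) = p * Real.Gamma p := Real.Gamma_add_one hp.ne'
  have h2 : Real.Gamma (p + 2) = (p + 1) * (p * Real.Gamma p) := by
    have := Real.Gamma_add_one (s := p + 1) (by positivity)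
    rw [show p + 2 = (p + 1) + 1 by ring, this, h1]
  have h3 : Real.Gamma (p + 3) = (p + 2) * ((p + 1) * (p * Real.Gamma p)) := by
    have := Real.Gamma_add_one (s := p + 2) (by positivity)
    rw [show p + 3 = (p + 2) + 1 by ring, this, h2]
  have h4 : Real.Gamma (p + 4) = (p + 3) * ((p + 2) * ((p + 1) * (p * Real.Gamma p))) := by
    have := Real.Gamma_add_one (s := p + 3) (by positivity)
    rw [show p + 4 = (p + 3) + 1 by ring, this, h3]
  unfold gegenbauer
  norm_num [Finset.sum_range_succ, Nat.factorial]
  rw [show (3 : ℝ) + p = p + 3 by ring, show (2 : ℝ) + p = p + 2 by ring,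
    show (4 : ℝ) + p = p + 4 by ring, h2, h3, h4]
  field_simp
  ring

lemma sum_sgn_sq_quad (n : ℕ) (a : Fin n → ℝ) :
    (∑ σ : Fin n → Bool, (∑ i, sgn (σ i) * a i) ^ 2) = 2 ^ n * ∑ i, a i ^ 2 ∧
    (∑ σ : Fin n → Bool, (∑ i, sgn (σ i) * a i) ^ 4)
      = 2 ^ n * (3 * (∑ i, a i ^ 2) ^ 2 - 2 * ∑ i, a i ^ 4) := by
  induction n with
  | zero => simp
  | succ n ih =>
    obtain ⟨ih2, ih4⟩ := ih (fun i => a i.succ)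
    have hcard : (Finset.univ : Finset (Fin n → Bool)).card = 2 ^ n := by
      simp [Finset.card_univ]
    have hsplit : ∀ (f : (Fin (n+1) → Bool) → ℝ),
        ∑ σ : Fin (n+1) → Bool, f σ
          = ∑ τ : Fin n → Bool, (f (Fin.cons true τ) + f (Fin.cons false τ)) := by
      intro f
      rw [← (Fin.consEquiv (fun _ : Fin (n+1) => Bool)).sum_comp f]
      rw [Fintype.sum_prod_type_right]
      exact Finset.sum_congr rfl fun τ _ => by simp [Fin.consEquiv]
    have hz : ∀ (b : Bool) (τ : Fin n → Bool),
        (∑ i : Fin (n+1), sgn ((Fin.cons b τ : Fin (n+1) → Bool) i) * a i)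
          = sgn b * a 0 + ∑ i : Fin n, sgn (τ i) * a i.succ := by
      intro b τ
      rw [Fin.sum_univ_succ]
      simp
    constructor
    · rw [hsplit]
      have : ∀ τ : Fin n → Bool,
          (∑ i : Fin (n+1), sgn ((Fin.cons true τ : Fin (n+1) → Bool) i) * a i) ^ 2
            + (∑ i : Fin (n+1), sgn ((Fin.cons false τ : Fin (n+1) → Bool) i) * a i) ^ 2
          = 2 * (a 0) ^ 2 + 2 * (∑ i : Fin n, sgn (τ i) * a i.succ) ^ 2 := by
        intro τ; rw [hz, hz]; simp [sgn]; ring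
      rw [Finset.sum_congr rfl fun τ _ => this τ, Finset.sum_add_distrib,
        Finset.sum_const, hcard, ← Finset.mul_sum, ih2, Fin.sum_univ_succ]
      ring
    · rw [hsplit]
      have : ∀ τ : Fin n → Bool,
          (∑ i : Fin (n+1), sgn ((Fin.cons true τ : Fin (n+1) → Bool) i) * a i) ^ 4
            + (∑ i : Fin (n+1), sgn ((Fin.cons false τ : Fin (n+1) → Bool) i) * a i) ^ 4
          = 2 * (a 0) ^ 4 + 12 * (a 0) ^ 2 * (∑ i : Fin n, sgn (τ i) * a i.succ) ^ 2
            + 2 * (∑ i : Fin n, sgn (τ i) * a i.succ) ^ 4 := by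
        intro τ; rw [hz, hz]; simp [sgn]; ring
      rw [Finset.sum_congr rfl fun τ _ => this τ, Finset.sum_add_distrib,
        Finset.sum_add_distrib, Finset.sum_const, hcard, ← Finset.mul_sum,
        ← Finset.mul_sum, ih2, ih4]
      rw [Fin.sum_univ_succ (f := fun i => a i ^ 2), Fin.sum_univ_succ (f := fun i => a i ^ 4)]
      ring

/-- The sign-averaged degree-4 Gegenbauer term equals the Griffiths eigenfunction
Q_2(x,x') = (1/2)(μ+3)[(μ+2)ξ_2 − 2(μ+1)ξ_1 + μ] with μ = k/2, ε = 1/2,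
x_i = y_i², x'_i = y'_i², ξ_1 = 2μ s_2 and ξ_2 = μ(μ+1)((4/3)s_4 + 4(s_2² − s_4)). -/
theorem degree_four_gegenbauer_eq_Q2 (k : ℕ) (hk : 3 ≤ k) (y y' : Fin k → ℝ)
    (hy : ∑ i : Fin k, (y i) ^ 2 = 1) (hy' : ∑ i : Fin k, (y' i) ^ 2 = 1)
    (x x' : Fin k → ℝ) (hx : ∀ i, x i = (y i) ^ 2) (hx' : ∀ i, x' i = (y' i) ^ 2)
    (μ s₂ s₄ ξ₁ ξ₂ : ℝ) (hμ : μ = (k : ℝ) / 2)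
    (hs₂ : s₂ = ∑ j : Fin k, x j * x' j) (hs₄ : s₄ = ∑ j : Fin k, (x j * x' j) ^ 2)
    (hξ₁ : ξ₁ = 2 * μ * s₂)
    (hξ₂ : ξ₂ = μ * (μ + 1) * ((4 / 3) * s₄ + 4 * (s₂ ^ 2 - s₄))) :
    ((2 : ℝ) ^ k)⁻¹ * ∑ σ : Fin k → Bool,
        ((2 * 4 + (k : ℝ) - 2) / ((k : ℝ) - 2)) *
          gegenbauer ((k : ℝ) / 2 - 1) 4 (∑ i : Fin k, sgn (σ i) * y i * y' i) =
      (1 / 2) * (μ + 3) * ((μ + 2) * ξ₂ - 2 * (μ + 1) * ξ₁ + μ) := by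
  have hk3 : (3 : ℝ) ≤ (k : ℝ) := by exact_mod_cast hk
  set p : ℝ := (k : ℝ) / 2 - 1 with hpdef
  have hp : 0 < p := by rw [hpdef]; linarith
  set a : Fin k → ℝ := fun i => y i * y' i with ha
  obtain ⟨h2, h4⟩ := sum_sgn_sq_quad k a
  have hcard : (Finset.univ : Finset (Fin k → Bool)).card = 2 ^ k := by
    simp [Finset.card_univ]
  have hzz : ∀ σ : Fin k → Bool,
      (∑ i : Fin k, sgn (σ i) * y i * y' i) = ∑ i : Fin k, sgn (σ i) * a i := by
    intro σ; exact Finset.sum_congr rfl fun i _ => by rw [ha]; ring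
  have hgeg : ∀ σ : Fin k → Bool,
      ((2 * 4 + (k : ℝ) - 2) / ((k : ℝ) - 2)) *
          gegenbauer ((k : ℝ) / 2 - 1) 4 (∑ i : Fin k, sgn (σ i) * y i * y' i)
        = ((2 * 4 + (k : ℝ) - 2) / ((k : ℝ) - 2)) *
            ((2 / 3) * (p * (p + 1) * (p + 2) * (p + 3)) * (∑ i : Fin k, sgn (σ i) * a i) ^ 4
              - 2 * (p * (p + 1) * (p + 2)) * (∑ i : Fin k, sgn (σ i) * a i) ^ 2
              + p * (p + 1) / 2) := by
    intro σ
    rw [hzz σ, ← hpdef, gegenbauer_four p hp]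
  rw [Finset.sum_congr rfl fun σ _ => hgeg σ, ← Finset.mul_sum]
  have hexp : ∑ σ : Fin k → Bool,
      ((2 / 3) * (p * (p + 1) * (p + 2) * (p + 3)) * (∑ i : Fin k, sgn (σ i) * a i) ^ 4
        - 2 * (p * (p + 1) * (p + 2)) * (∑ i : Fin k, sgn (σ i) * a i) ^ 2
        + p * (p + 1) / 2)
      = (2 / 3) * (p * (p + 1) * (p + 2) * (p + 3))
          * (2 ^ k * (3 * (∑ i, a i ^ 2) ^ 2 - 2 * ∑ i, a i ^ 4))
        - 2 * (p * (p + 1) * (p + 2)) * (2 ^ k * ∑ i, a i ^ 2)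
        + 2 ^ k * (p * (p + 1) / 2) := by
    rw [Finset.sum_add_distrib, Finset.sum_sub_distrib, ← Finset.mul_sum, ← Finset.mul_sum,
      Finset.sum_const, hcard, h2, h4, nsmul_eq_mul]
    push_cast
    ring
  rw [hexp]
  have hsa2 : s₂ = ∑ i, a i ^ 2 := by
    rw [hs₂]; exact Finset.sum_congr rfl fun i _ => by rw [hx, hx', ha]; ring
  have hsa4 : s₄ = ∑ i, a i ^ 4 := by
    rw [hs₄]; exact Finset.sum_congr rfl fun i _ => by rw [hx, hx', ha]; ring
  rw [← hsa2, ← hsa4, hξ₂, hξ₁, hμ, hpdef]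
  have hk2 : (k : ℝ) - 2 ≠ 0 := by linarith
  have h2k : (2 : ℝ) ^ k ≠ 0 := by positivity
  field_simp
  ring
end

section
/- Let k ≥ 2 be a natural number, let ε_1,...,ε_k be positive reals with μ = ∑_{i=1}^k ε_i, and define p on the open simplex U = {x ∈ ℝ^{k−1} : x_j > 0 for all j and ∑_{j=1}^{k−1} x_j < 1} by p(x) = (∏_{j=1}^{k−1} x_j^{ε_j − 1}) · (1 − ∑_{j=1}^{k−1} x_j)^{ε_k − 1}. Then for every i ∈ {1,...,k−1} and every x ∈ U, the probability flux vanishes: (1/2) · ∑_{j=1}^{k−1} ∂/∂x_j [ x_i (δ_{ij} − x_j) p(x) ] − (1/2) · (ε_i − μ x_i) · p(x) = 0. -/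
/-- Zero probability flux of the Dirichlet density for the Wright-Fisher diffusion with
parent-independent mutation. Here k = n + 1 ≥ 2, the simplex coordinates are
x_1, ..., x_n (with x_k = 1 − ∑ x_j implicit), and
p(x) = (∏_{j=1}^{n} x_j^{ε_j − 1}) (1 − ∑ x_j)^{ε_k − 1}. -/
theorem dirichlet_zero_flux (n : ℕ) (hn : 1 ≤ n)
    (ε : Fin (n + 1) → ℝ) (hε : ∀ i, 0 < ε i) (μ : ℝ) (hμ : μ = ∑ i : Fin (n + 1), ε i)
    (p : (Fin n → ℝ) → ℝ)
    (hp : ∀ z : Fin n → ℝ, p z =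
      (∏ j : Fin n, (z j) ^ (ε j.castSucc - 1)) * (1 - ∑ j : Fin n, z j) ^ (ε (Fin.last n) - 1))
    (U : Set (Fin n → ℝ)) (hU : U = {z | (∀ j, 0 < z j) ∧ ∑ j : Fin n, z j < 1}) :
    ∀ i : Fin n, ∀ x ∈ U,
      (1 / 2) * (∑ j : Fin n,
          fderiv ℝ (fun z => z i * ((if i = j then (1 : ℝ) else 0) - z j) * p z) x
            (Pi.single j 1)) -
        (1 / 2) * (ε i.castSucc - μ * x i) * p x = 0 := by
  intro i x hx
  rw [hU] at hx
  obtain ⟨hxpos, hxsum⟩ := hx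
  have hs : 0 < 1 - ∑ j, x j := by linarith
  set a : Fin n → ℝ := fun j => ε j.castSucc - 1 with ha
  set b : ℝ := ε (Fin.last n) - 1 with hb
  set φ : (Fin n → ℝ) → ℝ :=
    fun z => (∑ j, a j * Real.log (z j)) + b * Real.log (1 - ∑ j, z j) with hφdef
  -- p agrees with exp ∘ φ on the open simplex
  have hpeq : ∀ z : Fin n → ℝ, (∀ j, 0 < z j) → ∑ j, z j < 1 → p z = Real.exp (φ z) := by
    intro z hz hzs
    rw [hp, hφdef]
    rw [Real.exp_add, Real.exp_sum]
    congr 1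
    · exact Finset.prod_congr rfl fun j _ => by
        rw [Real.rpow_def_of_pos (hz j), mul_comm]
    · rw [Real.rpow_def_of_pos (by linarith), mul_comm]
  -- the open simplex is open
  have hUopen : IsOpen {z : Fin n → ℝ | (∀ j, 0 < z j) ∧ ∑ j, z j < 1} := by
    have h1 : IsOpen {z : Fin n → ℝ | ∀ j, 0 < z j} := by
      have he : {z : Fin n → ℝ | ∀ j, 0 < z j} = ⋂ j, {z : Fin n → ℝ | 0 < z j} := by
        ext z; simp
      rw [he]
      exact isOpen_iInter_of_finite fun j => isOpen_lt continuous_const (continuous_apply j)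
    have h2 : IsOpen {z : Fin n → ℝ | ∑ j, z j < 1} :=
      isOpen_lt (by continuity) continuous_const
    exact h1.inter h2
  have hnhds : {z : Fin n → ℝ | (∀ j, 0 < z j) ∧ ∑ j, z j < 1} ∈ nhds x :=
    hUopen.mem_nhds ⟨hxpos, hxsum⟩
  -- the derivative of φ
  set Dφ : (Fin n → ℝ) →L[ℝ] ℝ :=
    (∑ j, a j • ((x j)⁻¹ • (ContinuousLinearMap.proj j : (Fin n → ℝ) →L[ℝ] ℝ))) +
      b • ((1 - ∑ j, x j)⁻¹ •
        ((0 : (Fin n → ℝ) →L[ℝ] ℝ) - ∑ j, (ContinuousLinearMap.proj j : (Fin n → ℝ) →L[ℝ] ℝ)))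
    with hDφ
  have hSder : HasFDerivAt (fun z : Fin n → ℝ => ∑ j, z j)
      (∑ j, (ContinuousLinearMap.proj j : (Fin n → ℝ) →L[ℝ] ℝ)) x :=
    HasFDerivAt.fun_sum fun j _ => hasFDerivAt_apply j x
  have hφder : HasFDerivAt φ Dφ x := by
    apply HasFDerivAt.add
    · exact HasFDerivAt.fun_sum fun j _ =>
        ((hasFDerivAt_apply j x).log (hxpos j).ne').const_mul (a j)
    · exact (((hasFDerivAt_const (1 : ℝ) x).sub hSder).log hs.ne').const_mul b
  have hDφval : ∀ j : Fin n, Dφ (Pi.single j 1) = a j * (x j)⁻¹ - b * (1 - ∑ m, x m)⁻¹ := by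
    intro j
    rw [hDφ]
    simp only [ContinuousLinearMap.add_apply, ContinuousLinearMap.smul_apply,
      ContinuousLinearMap.sum_apply, ContinuousLinearMap.sub_apply,
      ContinuousLinearMap.zero_apply, ContinuousLinearMap.proj_apply,
      Pi.single_apply, smul_eq_mul, mul_ite, mul_one, mul_zero]
    rw [Finset.sum_ite_eq' Finset.univ j (fun m => a m * (x m)⁻¹),
      Finset.sum_ite_eq' Finset.univ j (fun _ => (1 : ℝ))]
    simp only [Finset.mem_univ, if_pos]
    ring
  -- the per-coordinate partial derivative
  have key : ∀ j : Fin n,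
      fderiv ℝ (fun z => z i * ((if i = j then (1 : ℝ) else 0) - z j) * p z) x (Pi.single j 1) =
        x i * ((if i = j then (1 : ℝ) else 0) - x j) * p x *
            (a j * (x j)⁻¹ - b * (1 - ∑ m, x m)⁻¹) +
          p x * ((if i = j then (1 : ℝ) else 0) * ((if i = j then (1 : ℝ) else 0) - x j) - x i) := by
    intro j
    have hu : HasFDerivAt (fun z : Fin n → ℝ => z i * ((if i = j then (1 : ℝ) else 0) - z j))
        (x i • ((0 : (Fin n → ℝ) →L[ℝ] ℝ) - ContinuousLinearMap.proj j) +
          ((if i = j then (1 : ℝ) else 0) - x j) • (ContinuousLinearMap.proj i : (Fin n → ℝ) →L[ℝ] ℝ)) x :=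
      (hasFDerivAt_apply i x).mul
        ((hasFDerivAt_const (if i = j then (1 : ℝ) else 0) x).sub
          (hasFDerivAt_apply j x))
    have hg : HasFDerivAt
        (fun z : Fin n → ℝ => z i * ((if i = j then (1 : ℝ) else 0) - z j) * Real.exp (φ z))
        ((x i * ((if i = j then (1 : ℝ) else 0) - x j)) • (Real.exp (φ x) • Dφ) +
          Real.exp (φ x) •
            (x i • ((0 : (Fin n → ℝ) →L[ℝ] ℝ) - ContinuousLinearMap.proj j) +
              ((if i = j then (1 : ℝ) else 0) - x j) •
                (ContinuousLinearMap.proj i : (Fin n → ℝ) →L[ℝ] ℝ))) x :=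
      hu.mul hφder.exp
    have heq : (fun z : Fin n → ℝ => z i * ((if i = j then (1 : ℝ) else 0) - z j) * p z)
        =ᶠ[nhds x] fun z => z i * ((if i = j then (1 : ℝ) else 0) - z j) * Real.exp (φ z) := by
      filter_upwards [hnhds] with z hz
      rw [hpeq z hz.1 hz.2]
    rw [heq.fderiv_eq, hg.fderiv]
    have hpx : p x = Real.exp (φ x) := hpeq x hxpos hxsum
    rw [hpx]
    simp only [ContinuousLinearMap.add_apply, ContinuousLinearMap.smul_apply,
      ContinuousLinearMap.sub_apply, ContinuousLinearMap.zero_apply,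
      ContinuousLinearMap.proj_apply, Pi.single_apply, smul_eq_mul,
      eq_self_iff_true, if_true]
    rw [hDφval j]
    by_cases hij : i = j
    · simp only [if_pos hij]
      subst hij
      ring
    · have hji : ¬ j = i := fun h => hij h.symm
      simp only [if_neg hij, if_neg hji]
      ring
  rw [Finset.sum_congr rfl fun j _ => key j]
  -- now pure algebra
  have hsplit : ∀ j : Fin n,
      x i * ((if i = j then (1 : ℝ) else 0) - x j) * p x *
          (a j * (x j)⁻¹ - b * (1 - ∑ m, x m)⁻¹) +
        p x * ((if i = j then (1 : ℝ) else 0) * ((if i = j then (1 : ℝ) else 0) - x j) - x i)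
      = (if i = j then
            x i * p x * (a j * (x j)⁻¹ - b * (1 - ∑ m, x m)⁻¹) + p x * (1 - x j)
          else 0) +
        ((-(x i * p x * a j) + x i * p x * b * (1 - ∑ m, x m)⁻¹ * x j) - p x * x i) := by
    intro j
    have hxj : x j * (a j * (x j)⁻¹) = a j := by
      rw [mul_comm, mul_assoc, inv_mul_cancel₀ (hxpos j).ne', mul_one]
    by_cases hij : i = j
    · simp only [if_pos hij]
      linear_combination (-(x i * p x)) * hxj
    · simp only [if_neg hij]
      linear_combination (-(x i * p x)) * hxj
  rw [Finset.sum_congr rfl fun j _ => hsplit j, Finset.sum_add_distrib,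
    Finset.sum_ite_eq Finset.univ i]
  simp only [Finset.mem_univ, if_pos]
  have hsum1 : ∑ j : Fin n, ((-(x i * p x * a j) + x i * p x * b * (1 - ∑ m, x m)⁻¹ * x j)
      - p x * x i)
      = -(x i * p x * (∑ j, a j)) + x i * p x * b * (1 - ∑ m, x m)⁻¹ * (∑ j, x j)
        - (n : ℝ) * (p x * x i) := by
    simp only [Finset.sum_sub_distrib, Finset.sum_add_distrib, Finset.sum_neg_distrib,
      Finset.sum_const, Finset.card_univ, Fintype.card_fin, nsmul_eq_mul,
      ← Finset.mul_sum]
  rw [hsum1]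
  have hA : ∑ j, a j = (μ - ε (Fin.last n)) - n := by
    rw [ha, hμ, Fin.sum_univ_castSucc (f := ε)]
    rw [Finset.sum_sub_distrib, Finset.sum_const, Finset.card_univ, Fintype.card_fin,
      nsmul_eq_mul, mul_one]
    ring
  have hxi : x i * (a i * (x i)⁻¹) = a i := by
    rw [mul_comm, mul_assoc, inv_mul_cancel₀ (hxpos i).ne', mul_one]
  have hSinv : (1 - ∑ m, x m) * (1 - ∑ m, x m)⁻¹ = 1 := mul_inv_cancel₀ hs.ne'
  rw [hA]
  have hai : a i = ε i.castSucc - 1 := by rw [ha]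
  have hb1 : b = ε (Fin.last n) - 1 := hb
  rw [hai] at hxi ⊢
  rw [hb1]
  linear_combination ((1 / 2) * p x) * hxi +
    (-((1 / 2) * x i * p x * (ε (Fin.last n) - 1))) * hSinv
end

section
/- Let k ≥ 2 be a natural number and ε_1,...,ε_k positive reals with μ = ∑_{i=1}^k ε_i. Then ∫_U (∏_{j=1}^{k−1} x_j^{ε_j − 1}) · (1 − ∑_{j=1}^{k−1} x_j)^{ε_k − 1} dx = (∏_{i=1}^k Γ(ε_i)) / Γ(μ), where U = {x ∈ ℝ^{k−1} : x_j > 0 for all j and ∑_{j=1}^{k−1} x_j < 1} and the integral is with respect to (k−1)-dimensional Lebesgue measure. -/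
open MeasureTheory
open MeasureTheory Complex in
lemma beta_value {a b c : ℝ} (ha : 0 < a) (hb : 0 < b) (hc : 0 < c) :
    ∫ x in (0:ℝ)..c, x ^ (a-1) * (c - x) ^ (b-1) =
      c ^ (a+b-1) * (Real.Gamma a * Real.Gamma b / Real.Gamma (a+b)) := by
  have key : ((∫ x in (0:ℝ)..c, x ^ (a-1) * (c - x) ^ (b-1) : ℝ) : ℂ)
      = ((c ^ (a+b-1) * (Real.Gamma a * Real.Gamma b / Real.Gamma (a+b)) : ℝ) : ℂ) := by
    rw [← intervalIntegral.integral_ofReal]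
    have h1 : ∫ x in (0:ℝ)..c, ((x ^ (a-1) * (c - x) ^ (b-1) : ℝ) : ℂ)
        = ∫ x in (0:ℝ)..c, (x : ℂ) ^ ((a:ℂ) - 1) * ((c:ℂ) - x) ^ ((b:ℂ) - 1) := by
      simp_rw [intervalIntegral.integral_of_le hc.le]
      refine setIntegral_congr_fun measurableSet_Ioc fun x hx => ?_
      push_cast
      rw [Complex.ofReal_cpow hx.1.le, Complex.ofReal_cpow (by linarith [hx.2] : (0:ℝ) ≤ c - x)]
      push_cast
      ring
    rw [h1, Complex.betaIntegral_scaled _ _ hc]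
    have hab : (0:ℝ) < a + b := by linarith
    have hG : Complex.Gamma ((a:ℂ) + b) ≠ 0 := by
      rw [(by push_cast; ring : ((a:ℂ) + b) = ((a+b : ℝ) : ℂ)), Complex.Gamma_ofReal]
      exact_mod_cast (Real.Gamma_pos_of_pos hab).ne'
    have hbeta : Complex.betaIntegral a b = Complex.Gamma a * Complex.Gamma b / Complex.Gamma ((a:ℂ)+b) := by
      rw [eq_div_iff hG, mul_comm, ← Complex.Gamma_mul_Gamma_eq_betaIntegral] <;> simp [ha, hb]
    rw [hbeta, show ((a:ℂ)+(b:ℂ)-1)=((a+b-1:ℝ):ℂ) by push_cast; ring,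
      ← Complex.ofReal_cpow hc.le,
      show ((a:ℂ)+(b:ℂ))=((a+b:ℝ):ℂ) by push_cast; ring,
      Complex.Gamma_ofReal, Complex.Gamma_ofReal, Complex.Gamma_ofReal]
    push_cast
    ring
  exact_mod_cast key

lemma beta_integrable {a b c : ℝ} (ha : 0 < a) (hb : 0 < b) (hc : 0 < c) :
    IntegrableOn (fun t : ℝ => t ^ (a-1) * (c - t) ^ (b-1)) (Set.Ioo 0 c) := by
  have h1 : IntervalIntegrable (fun x : ℝ => (x:ℂ) ^ ((a:ℂ) - 1) * ((1:ℂ) - x) ^ ((b:ℂ) - 1))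
      volume 0 1 := Complex.betaIntegral_convergent (by simpa using ha) (by simpa using hb)
  have h2 := h1.comp_mul_left (c := c⁻¹)
  rw [zero_div, one_div, inv_inv] at h2
  have h3 : IntegrableOn (fun x : ℝ => ((c⁻¹ * x : ℝ):ℂ) ^ ((a:ℂ) - 1) * (1 - ((c⁻¹ * x : ℝ):ℂ)) ^ ((b:ℂ) - 1))
      (Set.Ioo 0 c) := by
    have := (intervalIntegrable_iff_integrableOn_Ioc_of_le hc.le).mp h2
    exact this.mono_set Set.Ioo_subset_Ioc_self
  have h4 := ((h3.const_mul ((c ^ (a-1) * c ^ (b-1) : ℝ) : ℂ)).re)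
  refine (integrable_congr ?_).mp h4
  refine (ae_restrict_iff' measurableSet_Ioo).mpr (Filter.Eventually.of_forall fun t ht => ?_)
  have h0t : 0 < t := ht.1
  have htc : t < c := ht.2
  have hdiv : (0:ℝ) ≤ c⁻¹ * t := by positivity
  have hdiv2 : (0:ℝ) ≤ 1 - c⁻¹ * t := by
    rw [sub_nonneg, inv_mul_le_iff₀ hc, mul_one]; exact htc.le
  have e1 : ((c⁻¹ * t : ℝ):ℂ) ^ ((a:ℂ) - 1) = (((c⁻¹ * t) ^ (a-1) : ℝ) : ℂ) := by
    rw [show ((a:ℂ) - 1) = ((a - 1 : ℝ) : ℂ) by push_cast; ring, Complex.ofReal_cpow hdiv]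
  have e2 : (1 - ((c⁻¹ * t : ℝ):ℂ)) ^ ((b:ℂ) - 1) = (((1 - c⁻¹ * t) ^ (b-1) : ℝ) : ℂ) := by
    rw [show (1 - ((c⁻¹ * t : ℝ):ℂ)) = ((1 - c⁻¹*t : ℝ) : ℂ) by push_cast; ring,
      show ((b:ℂ) - 1) = ((b - 1 : ℝ) : ℂ) by push_cast; ring, Complex.ofReal_cpow hdiv2]
  simp only [e1, e2, ← Complex.ofReal_mul, Complex.ofReal_re]
  have : c ^ (a - 1) * c ^ (b - 1) * ((c⁻¹ * t) ^ (a - 1) * (1 - c⁻¹ * t) ^ (b - 1))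
      = t ^ (a-1) * (c - t) ^ (b-1) := by
    have hct : (0:ℝ) ≤ c - t := by linarith
    rw [show (1 - c⁻¹*t) = c⁻¹ * (c - t) by field_simp,
      Real.mul_rpow (by positivity) h0t.le, Real.mul_rpow (by positivity) hct]
    have hca : c ^ (a-1) * (c⁻¹) ^ (a-1) = 1 := by
      rw [← Real.mul_rpow hc.le (by positivity), mul_inv_cancel₀ hc.ne', Real.one_rpow]
    have hcb : c ^ (b-1) * (c⁻¹) ^ (b-1) = 1 := by
      rw [← Real.mul_rpow hc.le (by positivity), mul_inv_cancel₀ hc.ne', Real.one_rpow]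
    calc c ^ (a - 1) * c ^ (b - 1) * (c⁻¹ ^ (a - 1) * t ^ (a - 1) * (c⁻¹ ^ (b - 1) * (c - t) ^ (b - 1)))
        = (c ^ (a-1) * c⁻¹ ^ (a-1)) * (c ^ (b-1) * c⁻¹ ^ (b-1)) * (t ^ (a-1) * (c-t) ^ (b-1)) := by ring
      _ = t ^ (a-1) * (c - t) ^ (b-1) := by rw [hca, hcb, one_mul, one_mul]
  rw [this]
  simp


lemma beta_lintegral {a b c : ℝ} (ha : 0 < a) (hb : 0 < b) (hc : 0 < c) :
    ∫⁻ t in Set.Ioo 0 c, ENNReal.ofReal (t ^ (a-1) * (c - t) ^ (b-1)) =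
      ENNReal.ofReal (c ^ (a+b-1) * (Real.Gamma a * Real.Gamma b / Real.Gamma (a+b))) := by
  rw [← ofReal_integral_eq_lintegral_ofReal (beta_integrable ha hb hc)
    ((ae_restrict_iff' measurableSet_Ioo).mpr (Filter.Eventually.of_forall fun t ht =>
      mul_nonneg (Real.rpow_nonneg ht.1.le _) (Real.rpow_nonneg (by linarith [ht.2] : (0:ℝ) ≤ c - t) _)))]
  rw [← integral_Ioc_eq_integral_Ioo, ← intervalIntegral.integral_of_le hc.le,
    beta_value ha hb hc]


lemma measurableSet_simplex (n : ℕ) :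
    MeasurableSet {z : Fin n → ℝ | (∀ j, 0 < z j) ∧ ∑ j : Fin n, z j < 1} := by
  have : {z : Fin n → ℝ | (∀ j, 0 < z j) ∧ ∑ j : Fin n, z j < 1}
      = (⋂ j, {z : Fin n → ℝ | 0 < z j}) ∩ {z | ∑ j : Fin n, z j < 1} := by
    ext z; simp [Set.mem_iInter]
  rw [this]
  exact (MeasurableSet.iInter fun j =>
      measurableSet_lt measurable_const (measurable_pi_apply j)).inter
    (measurableSet_lt (Finset.measurable_sum _ fun j _ => measurable_pi_apply j) measurable_const)

lemma my_measurable_rpow_const (c : ℝ) : Measurable fun x : ℝ => x ^ c := by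
  measurability

lemma measurable_dirichlet_integrand (n : ℕ) (ε : Fin (n+1) → ℝ) :
    Measurable (fun x : Fin n → ℝ =>
      (∏ j : Fin n, (x j) ^ (ε j.castSucc - 1)) *
        (1 - ∑ j : Fin n, x j) ^ (ε (Fin.last n) - 1)) := by
  exact (Finset.measurable_prod _ fun j _ =>
      ((my_measurable_rpow_const _).comp (measurable_pi_apply j))).mul
    ((my_measurable_rpow_const _).comp
      (measurable_const.sub (Finset.measurable_sum _ fun j _ => measurable_pi_apply j)))

lemma dirichlet_aux (n : ℕ) :
    ∀ (ε : Fin (n+1) → ℝ), (∀ i, 0 < ε i) →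
    ∫⁻ x in {z : Fin n → ℝ | (∀ j, 0 < z j) ∧ ∑ j : Fin n, z j < 1},
      ENNReal.ofReal ((∏ j : Fin n, (x j) ^ (ε j.castSucc - 1)) *
        (1 - ∑ j : Fin n, x j) ^ (ε (Fin.last n) - 1))
    = ENNReal.ofReal ((∏ i : Fin (n+1), Real.Gamma (ε i)) /
        Real.Gamma (∑ i : Fin (n+1), ε i)) := by
  induction n with
  | zero =>
    intro ε hε
    have hset : {z : Fin 0 → ℝ | (∀ j, 0 < z j) ∧ ∑ j : Fin 0, z j < 1} = Set.univ := by
      ext z; simp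
    rw [hset, Measure.restrict_univ]
    have hint : (fun x : Fin 0 → ℝ => ENNReal.ofReal ((∏ j : Fin 0, (x j) ^ (ε j.castSucc - 1)) *
        (1 - ∑ j : Fin 0, x j) ^ (ε (Fin.last 0) - 1))) = fun _ => 1 := by
      funext x; simp
    rw [hint, lintegral_const, one_mul]
    have hG : 0 < Real.Gamma (ε 0) := Real.Gamma_pos_of_pos (hε 0)
    rw [show (volume : Measure (Fin 0 → ℝ)) Set.univ = 1 by
      rw [volume_pi, Measure.pi_univ]; simp]
    simp [Fin.prod_univ_one, Fin.sum_univ_one, div_self hG.ne']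
  | succ n IH =>
    intro ε hε
    set a := ε ((Fin.last n).castSucc) with ha_def
    set b := ε (Fin.last (n+1)) with hb_def
    have ha : 0 < a := hε _
    have hb : 0 < b := hε _
    set K := Real.Gamma a * Real.Gamma b / Real.Gamma (a+b) with hK_def
    have hK : 0 ≤ K := by
      have := Real.Gamma_pos_of_pos ha
      have := Real.Gamma_pos_of_pos hb
      have := Real.Gamma_pos_of_pos (by linarith : (0:ℝ) < a + b)
      positivity
    set U : Set (Fin (n+1) → ℝ) := {z | (∀ j, 0 < z j) ∧ ∑ j : Fin (n+1), z j < 1} with hU_def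
    set A : Set (Fin n → ℝ) := {y | (∀ j, 0 < y j) ∧ ∑ j : Fin n, y j < 1} with hA_def
    have hUm : MeasurableSet U := measurableSet_simplex (n+1)
    have hAm : MeasurableSet A := measurableSet_simplex n
    set f : (Fin (n+1) → ℝ) → ENNReal := fun z =>
      ENNReal.ofReal ((∏ j : Fin (n+1), (z j) ^ (ε j.castSucc - 1)) *
        (1 - ∑ j : Fin (n+1), z j) ^ (ε (Fin.last (n+1)) - 1)) with hf_def
    have hfm : Measurable f :=
      ENNReal.measurable_ofReal.comp (measurable_dirichlet_integrand (n+1) ε)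
    set e := MeasurableEquiv.piFinSuccAbove (fun _ : Fin (n+1) => ℝ) (Fin.last n) with he_def
    have hsymm : ∀ (t : ℝ) (y : Fin n → ℝ), e.symm (t, y) = Fin.snoc y t := by
      intro t y
      simp only [he_def, MeasurableEquiv.piFinSuccAbove_symm_apply]
      exact Fin.insertNth_last' t y
    have mp : MeasurePreserving e.symm volume volume :=
      (MeasureTheory.volume_preserving_piFinSuccAbove
        (fun _ : Fin (n+1) => ℝ) (Fin.last n)).symm
    -- transfer the set integral
    have step1 : ∫⁻ x in U, f x = ∫⁻ p : ℝ × (Fin n → ℝ), U.indicator f (e.symm p) := by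
      rw [← lintegral_indicator hUm, ← mp.lintegral_comp (hfm.indicator hUm)]
    have step2 : ∫⁻ p : ℝ × (Fin n → ℝ), U.indicator f (e.symm p)
        = ∫⁻ y : Fin n → ℝ, ∫⁻ t : ℝ, U.indicator f (e.symm (t, y)) := by
      have hcomp : Measurable fun p : ℝ × (Fin n → ℝ) => U.indicator f (e.symm p) :=
        (hfm.indicator hUm).comp e.symm.measurable
      rw [Measure.volume_eq_prod, lintegral_prod_symm _ hcomp.aemeasurable]
    -- membership description
    have hmem : ∀ (t : ℝ) (y : Fin n → ℝ), (Fin.snoc y t : Fin (n+1) → ℝ) ∈ U ↔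
        (y ∈ A ∧ t ∈ Set.Ioo (0:ℝ) (1 - ∑ j : Fin n, y j)) := by
      intro t y
      have hsum : ∑ j : Fin (n+1), (Fin.snoc y t : Fin (n+1) → ℝ) j
          = (∑ j : Fin n, y j) + t := by
        rw [Fin.sum_univ_castSucc]
        simp
      constructor
      · rintro ⟨hpos, hlt⟩
        rw [hsum] at hlt
        have ht : 0 < t := by simpa using hpos (Fin.last n)
        have hy : ∀ j, 0 < y j := fun j => by simpa using hpos j.castSucc
        exact ⟨⟨hy, by linarith⟩, ht, by linarith⟩
      · rintro ⟨⟨hy, _⟩, ht0, ht1⟩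
        refine ⟨fun j => ?_, by rw [hsum]; linarith⟩
        refine Fin.lastCases ?_ (fun i => ?_) j
        · simpa using ht0
        · simpa using hy i
    set P : (Fin n → ℝ) → ℝ := fun y => ∏ j : Fin n, y j ^ (ε j.castSucc.castSucc - 1)
      with hP_def
    have hsnoc_f : ∀ (t : ℝ) (y : Fin n → ℝ), f (Fin.snoc y t) =
        ENNReal.ofReal (P y * (t ^ (a-1) * ((1 - ∑ j : Fin n, y j) - t) ^ (b-1))) := by
      intro t y
      simp only [hf_def]
      congr 1
      rw [Fin.prod_univ_castSucc, Fin.sum_univ_castSucc]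
      simp only [Fin.snoc_castSucc, Fin.snoc_last]
      rw [show (1 : ℝ) - (∑ j : Fin n, y j + t) = (1 - ∑ j : Fin n, y j) - t by ring]
      rw [← ha_def]
      ring
    have inner : ∀ y : Fin n → ℝ, (∫⁻ t : ℝ, U.indicator f (e.symm (t, y)))
        = A.indicator (fun y => ENNReal.ofReal
            (P y * ((1 - ∑ j : Fin n, y j) ^ (a+b-1) * K))) y := by
      intro y
      simp_rw [hsymm]
      by_cases hy : y ∈ A
      · have hy1 : ∀ j, 0 < y j := hy.1
        have hy2 : ∑ j : Fin n, y j < 1 := hy.2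
        set c := 1 - ∑ j : Fin n, y j with hc_def
        have hc : 0 < c := by simp only [hc_def]; linarith
        have hPnn : 0 ≤ P y := Finset.prod_nonneg fun j _ => Real.rpow_nonneg (hy1 j).le _
        rw [Set.indicator_of_mem hy]
        have heq : ∀ t : ℝ, U.indicator f (Fin.snoc y t) =
            (Set.Ioo 0 c).indicator
              (fun t => ENNReal.ofReal (P y) *
                ENNReal.ofReal (t ^ (a-1) * (c - t) ^ (b-1))) t := by
          intro t
          rw [Set.indicator_apply, Set.indicator_apply,
            if_congr ((hmem t y).trans (and_iff_right hy)) ?_ rfl]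
          rw [hsnoc_f, ENNReal.ofReal_mul hPnn]
        simp_rw [heq]
        have hbm : Measurable fun t : ℝ => ENNReal.ofReal (t ^ (a-1) * (c - t) ^ (b-1)) :=
          ENNReal.measurable_ofReal.comp ((my_measurable_rpow_const _).mul
            ((my_measurable_rpow_const _).comp (measurable_const.sub measurable_id)))
        rw [lintegral_indicator measurableSet_Ioo, lintegral_const_mul _ hbm,
          beta_lintegral ha hb hc, ← ENNReal.ofReal_mul hPnn]
      · rw [Set.indicator_of_notMem hy]
        have hnot : ∀ t : ℝ, (Fin.snoc y t : Fin (n+1) → ℝ) ∉ U :=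
          fun t h => hy ((hmem t y).mp h).1
        have hzero : ∀ t : ℝ, U.indicator f (Fin.snoc y t) = 0 :=
          fun t => Set.indicator_of_notMem (hnot t) f
        simp_rw [hzero]
        simp
    -- new parameter vector for the induction hypothesis
    set ε' : Fin (n+1) → ℝ := Fin.snoc (fun j : Fin n => ε j.castSucc.castSucc) (a+b)
      with hε'_def
    have hε'c : ∀ j : Fin n, ε' j.castSucc = ε j.castSucc.castSucc := by
      intro j; simp [hε'_def]
    have hε'l : ε' (Fin.last n) = a + b := by simp [hε'_def]
    have hε' : ∀ i, 0 < ε' i := by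
      intro i
      refine Fin.lastCases ?_ (fun j => ?_) i
      · rw [hε'l]; linarith
      · rw [hε'c]; exact hε _
    rw [step1, step2]
    simp_rw [inner]
    rw [lintegral_indicator hAm]
    have hsplit : ∀ y : Fin n → ℝ, ENNReal.ofReal
        (P y * ((1 - ∑ j : Fin n, y j) ^ (a+b-1) * K))
        = ENNReal.ofReal ((∏ j : Fin n, y j ^ (ε' j.castSucc - 1)) *
            (1 - ∑ j : Fin n, y j) ^ (ε' (Fin.last n) - 1)) * ENNReal.ofReal K := by
      intro y
      simp_rw [hε'c, hε'l, hP_def]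
      rw [show (∏ j : Fin n, y j ^ (ε j.castSucc.castSucc - 1)) *
            ((1 - ∑ j : Fin n, y j) ^ (a+b-1) * K)
          = ((∏ j : Fin n, y j ^ (ε j.castSucc.castSucc - 1)) *
            (1 - ∑ j : Fin n, y j) ^ (a+b-1)) * K by ring,
        ENNReal.ofReal_mul' hK]
    simp_rw [hsplit]
    have hm' : Measurable fun y : Fin n → ℝ =>
        ENNReal.ofReal ((∏ j : Fin n, y j ^ (ε' j.castSucc - 1)) *
          (1 - ∑ j : Fin n, y j) ^ (ε' (Fin.last n) - 1)) :=
      ENNReal.measurable_ofReal.comp (measurable_dirichlet_integrand n ε')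
    rw [lintegral_mul_const _ hm', IH ε' hε', ← ENNReal.ofReal_mul' hK]
    -- final real algebra
    congr 1
    have hsum : ∑ i : Fin (n+1), ε' i = ∑ i : Fin (n+2), ε i := by
      rw [Fin.sum_univ_castSucc (f := ε'), Fin.sum_univ_castSucc (f := ε),
        Fin.sum_univ_castSucc (f := fun j : Fin (n+1) => ε j.castSucc)]
      simp_rw [hε'c, hε'l, ha_def, hb_def]
      ring
    have hprod : ∏ i : Fin (n+1), Real.Gamma (ε' i)
        = (∏ j : Fin n, Real.Gamma (ε j.castSucc.castSucc)) * Real.Gamma (a+b) := by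
      rw [Fin.prod_univ_castSucc (f := fun i => Real.Gamma (ε' i))]
      simp_rw [hε'c, hε'l]
    have hprod2 : ∏ i : Fin (n+2), Real.Gamma (ε i)
        = (∏ j : Fin n, Real.Gamma (ε j.castSucc.castSucc)) *
            Real.Gamma a * Real.Gamma b := by
      rw [Fin.prod_univ_castSucc (f := fun i => Real.Gamma (ε i)),
        Fin.prod_univ_castSucc (f := fun j : Fin (n+1) => Real.Gamma (ε j.castSucc))]
    have hGab : Real.Gamma (a+b) ≠ 0 := (Real.Gamma_pos_of_pos (by linarith)).ne'
    rw [hsum, hprod, hprod2, hK_def, div_mul_div_comm,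
      show ((∏ j : Fin n, Real.Gamma (ε j.castSucc.castSucc)) * Real.Gamma (a+b)) *
          (Real.Gamma a * Real.Gamma b)
        = ((∏ j : Fin n, Real.Gamma (ε j.castSucc.castSucc)) * Real.Gamma a * Real.Gamma b) *
          Real.Gamma (a+b) by ring,
      mul_div_mul_right _ _ hGab]

/-- The Dirichlet integral over the open simplex:
∫_U (∏ x_j^{ε_j−1}) (1 − ∑ x_j)^{ε_k−1} dx = (∏ Γ(ε_i)) / Γ(μ), where k = n + 1 ≥ 2. -/
theorem dirichlet_integral (n : ℕ) (hn : 1 ≤ n)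
    (ε : Fin (n + 1) → ℝ) (hε : ∀ i, 0 < ε i) (μ : ℝ) (hμ : μ = ∑ i : Fin (n + 1), ε i)
    (U : Set (Fin n → ℝ)) (hU : U = {z | (∀ j, 0 < z j) ∧ ∑ j : Fin n, z j < 1}) :
    ∫ x in U,
        (∏ j : Fin n, (x j) ^ (ε j.castSucc - 1)) *
          (1 - ∑ j : Fin n, x j) ^ (ε (Fin.last n) - 1) =
      (∏ i : Fin (n + 1), Real.Gamma (ε i)) / Real.Gamma μ := by
  subst hμ hU
  have hUm := measurableSet_simplex n
  have key := dirichlet_aux n ε hε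
  have hnn : 0 ≤ᵐ[volume.restrict {z : Fin n → ℝ | (∀ j, 0 < z j) ∧ ∑ j : Fin n, z j < 1}]
      fun x => (∏ j : Fin n, (x j) ^ (ε j.castSucc - 1)) *
        (1 - ∑ j : Fin n, x j) ^ (ε (Fin.last n) - 1) :=
    (ae_restrict_iff' hUm).mpr (Filter.Eventually.of_forall fun x hx =>
      mul_nonneg (Finset.prod_nonneg fun j _ => Real.rpow_nonneg (hx.1 j).le _)
        (Real.rpow_nonneg (by have := hx.2; linarith) _))
  rw [integral_eq_lintegral_of_nonneg_ae hnn
    (measurable_dirichlet_integrand n ε).aestronglyMeasurable, key,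
    ENNReal.toReal_ofReal]
  have hnum : 0 < ∏ i : Fin (n+1), Real.Gamma (ε i) :=
    Finset.prod_pos fun i _ => Real.Gamma_pos_of_pos (hε i)
  have hden : 0 < Real.Gamma (∑ i : Fin (n+1), ε i) :=
    Real.Gamma_pos_of_pos (Finset.sum_pos (fun i _ => hε i) Finset.univ_nonempty)
  positivity
end
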